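/- Ultimately periodic decomposition of runs of flat Kripke structures: every infinite run ρ of a flat Kripke structure with state set S can be written as ρ = u_0^{n_0} u_1^{n_1} … u_{m−1}^{n_{m−1}} u_m^ω with finite nonempty paths u_0, …, u_m, positive integers n_0, …, n_{m−1}, and |u_0 u_1 … u_m| ≤ 2|S|. -/

import Mathlib

def IsSimpleLoop {S : Type*} (E : S → S → Prop) (u : List S) : Prop :=
  u ≠ [] ∧ u.Chain' E ∧ (∀ a ∈ u.getLast?, ∀ b ∈ u.head?, E a b) ∧ u.Nodup

def Flat {S : Type*} (E : S → S → Prop) : Prop :=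
  ∀ s : S, {u : List S | IsSimpleLoop E u ∧ u.head? = some s}.Subsingleton

namespace Stmt10
variable {S : Type*} {E : S → S → Prop}

lemma cyc_iff {u : List S} (hu : u ≠ []) :
    IsSimpleLoop E u ↔ u.Nodup ∧ ∀ i (h : i < u.length),
      E u[i] (u[(i+1) % u.length]'(Nat.mod_lt _ (List.length_pos_iff.mpr hu))) := by
  have hpos : 0 < u.length := List.length_pos_iff.mpr hu
  constructor
  · rintro ⟨-, hch, hlh, hnd⟩
    refine ⟨hnd, fun i h => ?_⟩
    rcases Nat.lt_or_ge (i+1) u.length with h1 | h1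
    · have : (i+1) % u.length = i + 1 := Nat.mod_eq_of_lt h1
      rw [List.Chain', List.isChain_iff_getElem] at hch
      have := hch i (by omega)
      convert this using 2 <;> omega
    · have hi : i = u.length - 1 := by omega
      have : (i+1) % u.length = 0 := by
        have : i + 1 = u.length := by omega
        simp [this]
      have hl := hlh u[u.length - 1] (by
        rw [List.getLast?_eq_getElem?]
        exact (List.getElem?_eq_getElem _).symm ▸ rfl) u[0] (by
        rw [List.head?_eq_getElem?]
        exact (List.getElem?_eq_getElem _).symm ▸ rfl)
      convert hl using 2 <;> omega
  · rintro ⟨hnd, hE⟩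
    refine ⟨hu, ?_, ?_, hnd⟩
    · rw [List.Chain', List.isChain_iff_getElem]
      intro i h
      have := hE i (by omega)
      have hmod : (i+1) % u.length = i + 1 := Nat.mod_eq_of_lt (by omega)
      convert this using 2 <;> omega
    · intro a ha b hb
      rw [List.getLast?_eq_getElem?] at ha
      rw [List.head?_eq_getElem?] at hb
      have h1 : u[u.length-1]? = some a := ha
      have h2 : u[0]? = some b := hb
      rw [List.getElem?_eq_getElem (by omega)] at h1
      rw [List.getElem?_eq_getElem (by omega)] at h2
      have := hE (u.length - 1) (by omega)
      have hmod : (u.length - 1 + 1) % u.length = 0 := by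
        have : u.length - 1 + 1 = u.length := by omega
        simp [this]
      rw [Option.some_inj] at h1 h2
      subst h1; subst h2
      convert this using 2 <;> omega

lemma simpleLoop_rotate {u : List S} (h : IsSimpleLoop E u) (k : ℕ) :
    IsSimpleLoop E (u.rotate k) := by
  have hu : u ≠ [] := h.1
  have hpos : 0 < u.length := List.length_pos_iff.mpr hu
  have hru : u.rotate k ≠ [] := by
    intro hc; apply hu; simpa using congrArg List.length hc
  rw [cyc_iff hru]
  rw [cyc_iff hu] at h
  refine ⟨List.nodup_rotate.mpr h.1, fun i hi => ?_⟩
  have hlen : (u.rotate k).length = u.length := List.length_rotate u k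
  have h1 : (u.rotate k)[i] = u[(i + k) % u.length]'(Nat.mod_lt _ hpos) :=
    List.getElem_rotate u k i hi
  have h2 : (u.rotate k)[(i+1) % (u.rotate k).length]'(Nat.mod_lt _ (List.length_pos_iff.mpr hru))
      = u[(((i+1) % (u.rotate k).length) + k) % u.length]'(Nat.mod_lt _ hpos) :=
    List.getElem_rotate u k _ _
  rw [h1, h2]
  have hm : (((i+1) % (u.rotate k).length) + k) % u.length = ((i + k) % u.length + 1) % u.length := by
    rw [hlen, Nat.mod_add_mod, Nat.mod_add_mod]
    congr 1
    omega
  have hgoal := h.2 ((i+k) % u.length) (Nat.mod_lt _ hpos)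
  convert hgoal using 2

lemma sub_mod_eq {a d p : ℕ} (hdvd : p ∣ d) (hle : d ≤ a) : (a - d) % p = a % p := by
  obtain ⟨c, rfl⟩ := hdvd
  conv_rhs => rw [show a = (a - p * c) + p * c by omega]
  rw [Nat.add_mul_mod_self_left]

lemma closed_walk_periodic (hflat : Flat E) :
    ∀ (n : ℕ), ∀ (w : List S), w.length = n → 2 ≤ n → w.Chain' E →
      w.getLast? = w.head? →
      ∃ L, IsSimpleLoop E L ∧ ∀ k, k < n → w[k]? = L[k % L.length]? := by
  intro n
  induction n using Nat.strong_induction_on with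
  | _ n IH =>
  intro w hlen h2 hch hcl
  have hw : w ≠ [] := by intro h; rw [h] at hlen; simp at hlen; omega
  have hclose : w[n-1]? = w[0]? := by
    rw [List.getLast?_eq_getElem?, List.head?_eq_getElem?, hlen] at hcl; exact hcl
  have hchain : ∀ k, k + 1 < n → ∀ a ∈ w[k]?, ∀ b ∈ w[k+1]?, E a b := by
    intro k hk a ha b hb
    rw [List.Chain', List.isChain_iff_getElem] at hch
    have := hch k (by omega)
    rw [List.getElem?_eq_getElem (by omega)] at ha
    rw [List.getElem?_eq_getElem (by omega)] at hb
    rw [Option.mem_def, Option.some_inj] at ha hb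
    rw [← ha, ← hb]
    exact this
  by_cases hrep : ∃ i j, i < j ∧ j < n - 1 ∧ w[i]? = w[j]?
  · -- Case B : a repeat strictly inside the closed walk
    obtain ⟨i, j, hij, hjn, hwij⟩ := hrep
    -- the inner closed walk w1 = w[i..j]
    set w1 := (w.drop i).take (j - i + 1) with hw1def
    have hw1len : w1.length = j - i + 1 := by
      simp [hw1def, hlen]; omega
    have hw1get : ∀ k, k ≤ j - i → w1[k]? = w[i+k]? := by
      intro k hk
      rw [hw1def, List.getElem?_take, if_pos (by omega), List.getElem?_drop]
    -- the outer closed walk w2 = w[0..i] ++ w[j+1..n-1]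
    set w2 := w.take (i+1) ++ w.drop (j+1) with hw2def
    have hw2len : w2.length = n - (j - i) := by
      simp [hw2def, hlen]; omega
    have hw2get1 : ∀ k, k ≤ i → w2[k]? = w[k]? := by
      intro k hk
      rw [hw2def, List.getElem?_append, if_pos (by simp [hlen]; omega),
        List.getElem?_take, if_pos (by omega)]
    have hw2get2 : ∀ k, i + 1 ≤ k → k < n - (j - i) → w2[k]? = w[k + (j-i)]? := by
      intro k hk1 hk2
      rw [hw2def, List.getElem?_append, if_neg (by simp [hlen]; omega),
        List.getElem?_drop]
      congr 1
      simp [hlen]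
      omega
    -- apply IH to w1
    have hw1chain : w1.Chain' E := by
      rw [List.Chain', List.isChain_iff_getElem]
      intro k hk
      rw [hw1len] at hk
      have h1 : w1[k]? = w[i+k]? := hw1get k (by omega)
      have h2 : w1[k+1]? = w[i+(k+1)]? := hw1get (k+1) (by omega)
      apply hchain (i+k) (by omega)
      · rw [← h1]; exact List.getElem?_eq_getElem _
      · rw [show i+k+1 = i+(k+1) by omega, ← h2]
        exact List.getElem?_eq_getElem (by rw [hw1len]; omega)
    have hw1cl : w1.getLast? = w1.head? := by
      rw [List.getLast?_eq_getElem?, List.head?_eq_getElem?, hw1len]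
      simp only [Nat.add_sub_cancel]
      rw [hw1get (j-i) le_rfl, show i + (j-i) = j by omega,
        hw1get 0 (by omega), show i + 0 = i by omega]
      exact hwij.symm
    obtain ⟨L1, hL1, hL1per⟩ := IH (j - i + 1) (by omega) w1 hw1len (by omega)
      hw1chain hw1cl
    -- apply IH to w2
    have hw2chain : w2.Chain' E := by
      rw [List.Chain', List.isChain_iff_getElem]
      intro k hk
      rw [hw2len] at hk
      rcases Nat.lt_or_ge (k+1) (i+1) with hki | hki
      · apply hchain k (by omega)
        · rw [← hw2get1 k (by omega)]; exact List.getElem?_eq_getElem _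
        · rw [← hw2get1 (k+1) (by omega)]
          exact List.getElem?_eq_getElem (by rw [hw2len]; omega)
      rcases Nat.eq_or_lt_of_le hki with hki2 | hki2
      · -- junction : k = i
        have hkeq : k = i := by omega
        subst hkeq
        have ha : w2[k]? = w[j]? := by rw [hw2get1 k le_rfl, hwij]
        have hb : w2[k+1]? = w[j+1]? := by
          rw [hw2get2 (k+1) (by omega) (by omega)]; congr 1; omega
        apply hchain j (by omega)
        · rw [← ha]; exact List.getElem?_eq_getElem _
        · rw [← hb]; exact List.getElem?_eq_getElem (by rw [hw2len]; omega)
      · apply hchain (k + (j-i)) (by omega)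
        · rw [← hw2get2 k (by omega) (by omega)]
          exact List.getElem?_eq_getElem _
        · rw [show k + (j-i) + 1 = (k+1) + (j-i) by omega,
            ← hw2get2 (k+1) (by omega) (by omega)]
          exact List.getElem?_eq_getElem (by rw [hw2len]; omega)
    have hw2cl : w2.getLast? = w2.head? := by
      rw [List.getLast?_eq_getElem?, List.head?_eq_getElem?, hw2len]
      rw [hw2get2 (n - (j-i) - 1) (by omega) (by omega), hw2get1 0 (by omega)]
      rw [show n - (j-i) - 1 + (j-i) = n - 1 by omega]
      exact hclose
    obtain ⟨L2, hL2, hL2per⟩ := IH (n - (j-i)) (by omega) w2 hw2len (by omega)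
      hw2chain hw2cl
    -- identify the two loops via flatness
    have hp1pos : 0 < L1.length := List.length_pos_iff.mpr hL1.1
    have hp2pos : 0 < L2.length := List.length_pos_iff.mpr hL2.1
    set p := L2.length with hpdef
    set δ := i % p with hδdef
    have hδlt : δ < p := Nat.mod_lt _ hp2pos
    -- head of L1 is w[i]
    have hL1head : L1[0]? = w[i]? := by
      have := hL1per 0 (by omega)
      rw [hw1get 0 (by omega)] at this
      simpa using this.symm
    have hL2δ : L2[δ]? = w[i]? := by
      have := hL2per i (by omega)
      rw [hw2get1 i le_rfl] at this
      exact this.symm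
    have hrot : IsSimpleLoop E (L2.rotate δ) := simpleLoop_rotate hL2 δ
    have hrothead : (L2.rotate δ)[0]? = w[i]? := by
      rw [List.getElem?_rotate hp2pos]
      simpa [Nat.mod_eq_of_lt (show δ < L2.length from hδlt)] using hL2δ
    have hL1eq : L1 = L2.rotate δ := by
      obtain ⟨x, hx⟩ : ∃ x, w[i]? = some x :=
        ⟨_, List.getElem?_eq_getElem (by omega)⟩
      apply hflat x
      · exact ⟨hL1, by rw [List.head?_eq_getElem?, hL1head]; exact hx⟩
      · exact ⟨hrot, by rw [List.head?_eq_getElem?, hrothead]; exact hx⟩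
    have hp1p : L1.length = p := by rw [hL1eq, List.length_rotate]
    -- L1 indexed from L2
    have hL1idx : ∀ m, m < p → L1[m]? = L2[(m + δ) % p]? := by
      intro m hm
      rw [hL1eq]
      exact List.getElem?_rotate (by omega)
    -- p divides j - i
    have hdvd : p ∣ (j - i) := by
      have h1 : w1[j-i]? = L1[(j-i) % L1.length]? := hL1per (j-i) (by omega)
      have h2 : w1[0]? = L1[0]? := by
        have := hL1per 0 (by omega); simpa using this
      have h3 : w1[j-i]? = w1[0]? := by
        rw [hw1get (j-i) le_rfl, show i + (j-i) = j by omega,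
          hw1get 0 (by omega), show i + 0 = i by omega]
        exact hwij.symm
      rw [h3, h2] at h1
      rw [hp1p] at h1
      by_contra hnd
      have hne : (j - i) % p ≠ 0 := fun hc => hnd (Nat.dvd_iff_mod_eq_zero.mpr hc)
      have := (List.nodup_iff_getElem?_ne_getElem?.mp hL1.2.2.2) 0 ((j-i) % p)
        (by omega) (by rw [hp1p]; exact Nat.mod_lt _ hp2pos)
      exact this h1
    -- conclude
    refine ⟨L2, hL2, fun k hk => ?_⟩
    rcases Nat.lt_or_ge k (i+1) with hki | hki
    · rw [← hw2get1 k (by omega)]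
      exact hL2per k (by omega)
    rcases Nat.lt_or_ge k (j+1) with hkj | hkj
    · -- middle segment, use L1
      have h1 : w[k]? = w1[k-i]? := by
        rw [hw1get (k-i) (by omega)]; congr 1; omega
      rw [h1, hL1per (k-i) (by omega), hp1p, hL1idx _ (Nat.mod_lt _ hp2pos)]
      congr 1
      rw [Nat.mod_add_mod, hδdef, Nat.add_mod (k-i) (i % p), Nat.mod_mod_of_dvd i dvd_rfl,
        ← Nat.add_mod]
      congr 1
      omega
    · -- last segment, use w2 shifted
      have h1 : w[k]? = w2[k - (j-i)]? := by
        rw [hw2get2 (k - (j-i)) (by omega) (by omega)]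
        congr 1; omega
      rw [h1, hL2per (k - (j-i)) (by omega)]
      congr 1
      exact sub_mod_eq hdvd (by omega)
  · -- Case A : no interior repeat, dropLast is a simple loop
    push_neg at hrep
    set L := w.dropLast with hLdef
    have hLlen : L.length = n - 1 := by rw [hLdef, List.length_dropLast, hlen]
    have hLget : ∀ k, k < n - 1 → L[k]? = w[k]? := by
      intro k hk
      rw [List.getElem?_eq_getElem (by omega), List.getElem?_eq_getElem (by omega)]
      congr 1
      exact List.getElem_dropLast (by rw [List.length_dropLast, hlen]; omega)
    have hLne : L ≠ [] := by
      intro hc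
      have := congrArg List.length hc
      rw [hLlen] at this
      simp at this
      omega
    have hLnodup : L.Nodup := by
      rw [List.nodup_iff_getElem?_ne_getElem?]
      intro a b hab hb hc
      rw [hLlen] at hb
      rw [hLget a (by omega), hLget b (by omega)] at hc
      exact hrep a b hab hb hc
    have hLloop : IsSimpleLoop E L := by
      rw [cyc_iff hLne]
      refine ⟨hLnodup, fun k hk => ?_⟩
      rw [hLlen] at hk
      rcases Nat.lt_or_ge (k+1) (n-1) with h1 | h1
      · have hmod : (k+1) % L.length = k+1 := by rw [hLlen]; exact Nat.mod_eq_of_lt h1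
        apply hchain k (by omega)
        · rw [← hLget k (by omega)]; exact List.getElem?_eq_getElem (by omega)
        · have hg : L[(k+1) % L.length]? = w[k+1]? := by
            rw [hmod]; exact hLget (k+1) (by omega)
          rw [← hg]
          exact List.getElem?_eq_getElem (by rw [hmod, hLlen]; omega)
      · -- wrap-around
        have hkeq : k = n - 2 := by omega
        have hmod : (k+1) % L.length = 0 := by
          rw [hLlen, show k + 1 = n - 1 by omega, Nat.mod_self]
        apply hchain (n-2) (by omega)
        · have hg : L[k]? = w[n-2]? := by
            rw [hLget k (by omega), show w[k]? = w[n-2]? from by rw [hkeq]]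
          rw [← hg]
          exact List.getElem?_eq_getElem (by omega)
        · have hg : L[(k+1) % L.length]? = w[n-2+1]? := by
            rw [hmod, hLget 0 (by omega), show n-2+1 = n-1 by omega]
            exact hclose.symm
          rw [← hg]
          exact List.getElem?_eq_getElem (by rw [hmod, hLlen]; omega)
    refine ⟨L, hLloop, fun k hk => ?_⟩
    rcases Nat.lt_or_ge k (n-1) with h1 | h1
    · rw [hLlen, Nat.mod_eq_of_lt h1, hLget k h1]
    · have hkeq : k = n - 1 := by omega
      rw [hkeq, hclose, hLlen, Nat.mod_self, hLget 0 (by omega)]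

/-- `x` never occurs strictly after time `t`. -/
def NeverAfter (ρ : ℕ → S) (x : S) (t : ℕ) : Prop := ∀ τ, t < τ → ρ τ ≠ x

/-- Decomposition of the run from time `t` into blocks `bs` followed by the
infinitely repeated loop `w`. -/
inductive Blocks (E : S → S → Prop) (ρ : ℕ → S) : ℕ → List (List S × ℕ) → List S → Prop
  | final (t : ℕ) (w : List S) :
      IsSimpleLoop E w →
      (∀ j : ℕ, w[j % w.length]? = some (ρ (t + j))) →
      Blocks E ρ t [] w
  | single (t : ℕ) (bs : List (List S × ℕ)) (w : List S) :
      NeverAfter ρ (ρ t) t →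
      Blocks E ρ (t+1) bs w →
      Blocks E ρ t (([ρ t], 1) :: bs) w
  | loop (t : ℕ) (L : List S) (n : ℕ) (bs : List (List S × ℕ)) (w : List S) :
      IsSimpleLoop E L →
      (∀ δ, δ < L.length → L[δ]? = some (ρ (t + δ))) →
      1 ≤ n →
      (∀ k, k < n * L.length → ρ (t + k) = ρ (t + k % L.length)) →
      ρ (t + n * L.length) = ρ t →
      NeverAfter ρ (ρ t) (t + n * L.length) →
      Blocks E ρ (t + n * L.length) bs w →
      Blocks E ρ t ((L, n) :: bs) w

lemma join_replicate_length (L : List S) (n : ℕ) :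
    ((List.replicate n L).flatten).length = n * L.length := by
  induction n with
  | zero => simp
  | succ n ih => simp [List.replicate_succ, ih]; ring

lemma join_replicate_getElem? (L : List S) (n k : ℕ) (hk : k < n * L.length) :
    ((List.replicate n L).flatten)[k]? = L[k % L.length]? := by
  induction n generalizing k with
  | zero => omega
  | succ n ih =>
    have hLpos : 0 < L.length := by
      rcases Nat.eq_zero_or_pos L.length with h | h
      · rw [h] at hk; omega
      · exact h
    have hmul : (n + 1) * L.length = n * L.length + L.length := by ring
    rw [List.replicate_succ, List.flatten_cons, List.getElem?_append]
    by_cases h : k < L.length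
    · rw [if_pos h, Nat.mod_eq_of_lt h]
    · rw [if_neg h]
      rw [ih (k - L.length) (by omega)]
      congr 1
      exact sub_mod_eq (a := k) (dvd_refl L.length) (by omega)

lemma blocks_ne {ρ : ℕ → S} {t : ℕ} {bs : List (List S × ℕ)} {w : List S}
    (h : Blocks E ρ t bs w) : (∀ b ∈ bs, b.1 ≠ [] ∧ 1 ≤ b.2) ∧ w ≠ [] := by
  induction h with
  | final t w hw _ => exact ⟨by simp, hw.1⟩
  | single t bs w _ _ ih =>
    refine ⟨?_, ih.2⟩
    intro b hb
    rcases List.mem_cons.mp hb with rfl | hb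
    · exact ⟨by simp, le_rfl⟩
    · exact ih.1 b hb
  | loop t L n bs w hL _ hn _ _ _ _ ih =>
    refine ⟨?_, ih.2⟩
    intro b hb
    rcases List.mem_cons.mp hb with rfl | hb
    · exact ⟨hL.1, hn⟩
    · exact ih.1 b hb

lemma blocks_match {ρ : ℕ → S} {t : ℕ} {bs : List (List S × ℕ)} {w : List S}
    (h : Blocks E ρ t bs w) :
    (∀ k, k < ((bs.map fun b => (List.replicate b.2 b.1).flatten).flatten).length →
      ((bs.map fun b => (List.replicate b.2 b.1).flatten).flatten)[k]? = some (ρ (t + k))) ∧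
    (∀ j : ℕ, w[j % w.length]? =
      some (ρ (t + ((bs.map fun b => (List.replicate b.2 b.1).flatten).flatten).length + j))) := by
  induction h with
  | final t w _ hper =>
    refine ⟨by simp, fun j => by simpa using hper j⟩
  | single t bs w _ _ ih =>
    constructor
    · intro k hk
      simp only [List.map_cons, List.flatten_cons] at hk ⊢
      rw [List.getElem?_append]
      by_cases h0 : k < ((List.replicate 1 [ρ t]).flatten).length
      · simp only [List.flatten, List.replicate] at h0 ⊢
        rw [if_pos (by simpa using h0)]
        have : k = 0 := by simpa using h0
        subst this
        simp
      · rw [if_neg (by simpa using h0)]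
        simp only [List.flatten, List.replicate] at h0 hk ⊢
        have h1 : 1 ≤ k := by by_contra hc; simp at h0 ⊢; omega
        have := ih.1 (k - 1) (by simp at hk ⊢; omega)
        simp at this ⊢
        rw [this]
        congr 2
        omega
    · intro j
      simp only [List.map_cons, List.flatten_cons, List.length_append]
      have := ih.2 j
      rw [this]
      congr 2
      simp [List.replicate]
      omega
  | loop t L n bs w hL hseg hn hper hclose hna _ ih =>
    have hLpos : 0 < L.length := List.length_pos_iff.mpr hL.1
    constructor
    · intro k hk
      simp only [List.map_cons, List.flatten_cons] at hk ⊢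
      rw [List.getElem?_append, join_replicate_length]
      by_cases h0 : k < n * L.length
      · rw [if_pos h0, join_replicate_getElem? L n k h0,
          hseg (k % L.length) (Nat.mod_lt _ hLpos)]
        rw [← hper k h0]
      · rw [if_neg h0]
        rw [List.length_append, join_replicate_length] at hk
        have := ih.1 (k - n * L.length) (by omega)
        rw [this]
        congr 2
        omega
    · intro j
      simp only [List.map_cons, List.flatten_cons, List.length_append, join_replicate_length]
      have := ih.2 j
      rw [this]
      congr 2
      omega

/-- `x` lies on a simple loop that the run traverses (starting at some `τ ≥ t₀`). -/
def LoopElt (E : S → S → Prop) (ρ : ℕ → S) (t₀ : ℕ) (x : S) : Prop :=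
  ∃ (M : List S) (τ : ℕ), t₀ ≤ τ ∧ IsSimpleLoop E M ∧
    (∀ δ, δ < M.length → M[δ]? = some (ρ (τ + δ))) ∧
    ρ (τ + M.length) = ρ τ ∧ x ∈ M

lemma loop_disjoint (hflat : Flat E) {ρ : ℕ → S} {L M : List S} {t n τ : ℕ}
    (hL : IsSimpleLoop E L) (hsegL : ∀ δ, δ < L.length → L[δ]? = some (ρ (t + δ)))
    (hna : NeverAfter ρ (ρ t) (t + n * L.length))
    (hτ : t + n * L.length ≤ τ)
    (hM : IsSimpleLoop E M) (hsegM : ∀ δ, δ < M.length → M[δ]? = some (ρ (τ + δ)))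
    (hMclose : ρ (τ + M.length) = ρ τ)
    {x : S} (hxL : x ∈ L) (hxM : x ∈ M) : False := by
  have hLpos : 0 < L.length := List.length_pos_iff.mpr hL.1
  have hMpos : 0 < M.length := List.length_pos_iff.mpr hM.1
  obtain ⟨δ1, hδ1⟩ := List.mem_iff_getElem?.mp hxL
  obtain ⟨δ2, hδ2⟩ := List.mem_iff_getElem?.mp hxM
  have hδ1lt : δ1 < L.length := by
    by_contra hc
    rw [List.getElem?_eq_none (by omega)] at hδ1
    cases hδ1
  have hδ2lt : δ2 < M.length := by
    by_contra hc
    rw [List.getElem?_eq_none (by omega)] at hδ2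
    cases hδ2
  have hrot1 : IsSimpleLoop E (L.rotate δ1) := simpleLoop_rotate hL δ1
  have hrot2 : IsSimpleLoop E (M.rotate δ2) := simpleLoop_rotate hM δ2
  have hh1 : (L.rotate δ1).head? = some x := by
    rw [List.head?_eq_getElem?, List.getElem?_rotate hLpos, Nat.zero_add,
      Nat.mod_eq_of_lt hδ1lt]
    exact hδ1
  have hh2 : (M.rotate δ2).head? = some x := by
    rw [List.head?_eq_getElem?, List.getElem?_rotate hMpos, Nat.zero_add,
      Nat.mod_eq_of_lt hδ2lt]
    exact hδ2
  have heq : L.rotate δ1 = M.rotate δ2 := hflat x ⟨hrot1, hh1⟩ ⟨hrot2, hh2⟩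
  -- hence ρ t ∈ M
  have hsL : ρ t ∈ L := by
    have := hsegL 0 hLpos
    rw [Nat.add_zero] at this
    exact List.mem_of_getElem? this
  have hsM : ρ t ∈ M := by
    have h1 : ρ t ∈ L.rotate δ1 := (List.mem_rotate).mpr hsL
    rw [heq] at h1
    exact (List.mem_rotate).mp h1
  obtain ⟨δ3, hδ3⟩ := List.mem_iff_getElem?.mp hsM
  have hδ3lt : δ3 < M.length := by
    by_contra hc
    rw [List.getElem?_eq_none (by omega)] at hδ3
    cases hδ3
  have hval : ρ (τ + δ3) = ρ t := by
    have := hsegM δ3 hδ3lt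
    rw [hδ3] at this
    exact (Option.some_inj.mp this).symm
  rcases Nat.eq_zero_or_pos δ3 with h3 | h3
  · subst h3
    rw [Nat.add_zero] at hval
    have : ρ (τ + M.length) = ρ t := by rw [hMclose, hval]
    exact hna (τ + M.length) (by omega) this
  · exact hna (τ + δ3) (by omega) hval

lemma blocks_bound [Fintype S] (hflat : Flat E) {ρ : ℕ → S} {t : ℕ}
    {bs : List (List S × ℕ)} {w : List S} (h : Blocks E ρ t bs w) :
    ((bs.map Prod.fst).flatten).length + w.length ≤ 2 * Fintype.card S := by
  suffices H : ∃ lp sp : List S, lp.Nodup ∧ sp.Nodup ∧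
      ((bs.map Prod.fst).flatten).length + w.length ≤ lp.length + sp.length ∧
      (∀ x ∈ lp, LoopElt E ρ t x) ∧
      (∀ y ∈ sp, ∃ τ, t ≤ τ ∧ ρ τ = y ∧ NeverAfter ρ y τ) by
    obtain ⟨lp, sp, h1, h2, h3, -, -⟩ := H
    have := h1.length_le_card
    have := h2.length_le_card
    omega
  induction h with
  | final t w hw hper =>
    refine ⟨w, [], hw.2.2.2, List.nodup_nil, by simp, ?_, by simp⟩
    intro x hx
    refine ⟨w, t, le_rfl, hw, ?_, ?_, hx⟩
    · intro δ hδ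
      have := hper δ
      rwa [Nat.mod_eq_of_lt hδ] at this
    · have h0 := hper 0
      have hl := hper w.length
      rw [Nat.mod_self] at hl
      simp only [Nat.zero_mod, Nat.add_zero] at h0
      rw [h0] at hl
      exact (Option.some_inj.mp hl).symm
  | single t bs w hna hb ih =>
    obtain ⟨lp, sp, h1, h2, h3, h4, h5⟩ := ih
    refine ⟨lp, ρ t :: sp, h1, ?_, ?_, ?_, ?_⟩
    · refine List.nodup_cons.mpr ⟨?_, h2⟩
      intro hc
      obtain ⟨τ, hτ, hρτ, -⟩ := h5 (ρ t) hc
      exact hna τ (by omega) hρτ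
    · simp only [List.map_cons, List.flatten_cons, List.length_append,
        List.length_cons] at h3 ⊢
      simp at h3 ⊢
      omega
    · intro x hx
      obtain ⟨M, τ, hτ, rest⟩ := h4 x hx
      exact ⟨M, τ, by omega, rest⟩
    · intro y hy
      rcases List.mem_cons.mp hy with rfl | hy
      · exact ⟨t, le_rfl, rfl, hna⟩
      · obtain ⟨τ, hτ, rest⟩ := h5 y hy
        exact ⟨τ, by omega, rest⟩
  | loop t L n bs w hL hseg hn hper hclose hna hb ih =>
    obtain ⟨lp, sp, h1, h2, h3, h4, h5⟩ := ih
    have hLpos : 0 < L.length := List.length_pos_iff.mpr hL.1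
    have hLclose1 : ρ (t + L.length) = ρ t := by
      rcases Nat.lt_or_ge L.length (n * L.length) with hcase | hcase
      · have := hper L.length hcase
        rwa [Nat.mod_self, Nat.add_zero] at this
      · have hn1 : n = 1 := by
          rcases Nat.lt_or_ge 1 n with h' | h'
          · exfalso; nlinarith
          · omega
        have : n * L.length = L.length := by rw [hn1, Nat.one_mul]
        rw [← this]
        exact hclose
    refine ⟨L ++ lp, sp, ?_, h2, ?_, ?_, ?_⟩
    · refine (List.nodup_append).mpr ⟨hL.2.2.2, h1, ?_⟩
      intro x hxL y hxlp hxy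
      subst hxy
      obtain ⟨M, τ, hτ, hM, hsegM, hMclose, hxM⟩ := h4 x hxlp
      exact loop_disjoint hflat hL hseg hna hτ hM hsegM hMclose hxL hxM
    · simp only [List.map_cons, List.flatten_cons, List.length_append] at h3 ⊢
      omega
    · intro x hx
      rcases List.mem_append.mp hx with hx | hx
      · exact ⟨L, t, le_rfl, hL, hseg, hLclose1, hx⟩
      · obtain ⟨M, τ, hτ, rest⟩ := h4 x hx
        exact ⟨M, τ, by omega, rest⟩
    · intro y hy
      obtain ⟨τ, hτ, rest⟩ := h5 y hy
      exact ⟨τ, by omega, rest⟩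

lemma run_loop (hflat : Flat E) {ρ : ℕ → S} (hrun : ∀ k, E (ρ k) (ρ (k + 1)))
    {t τ : ℕ} (h : t < τ) (hs : ρ τ = ρ t) :
    ∃ L, IsSimpleLoop E L ∧ ∀ k, k ≤ τ - t → L[k % L.length]? = some (ρ (t + k)) := by
  set w := (List.range (τ - t + 1)).map (fun i => ρ (t + i)) with hwdef
  have hwlen : w.length = τ - t + 1 := by simp [hwdef]
  have hwget : ∀ k, k ≤ τ - t → w[k]? = some (ρ (t + k)) := by
    intro k hk
    rw [hwdef, List.getElem?_map, List.getElem?_range (by omega)]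
    rfl
  have hch : w.Chain' E := by
    rw [List.Chain', List.isChain_iff_getElem]
    intro i hi
    rw [hwlen] at hi
    have h1 := hwget i (by omega)
    have h2 := hwget (i+1) (by omega)
    rw [List.getElem?_eq_getElem (by omega)] at h1
    rw [List.getElem?_eq_getElem (by omega)] at h2
    rw [Option.some_inj] at h1 h2
    rw [h1, h2, show t + (i+1) = (t + i) + 1 by omega]
    exact hrun (t + i)
  have hcl : w.getLast? = w.head? := by
    rw [List.getLast?_eq_getElem?, List.head?_eq_getElem?, hwlen]
    simp only [Nat.add_sub_cancel]
    rw [hwget (τ - t) le_rfl, hwget 0 (by omega)]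
    rw [show t + (τ - t) = τ by omega, Nat.add_zero, hs]
  obtain ⟨L, hL, hLper⟩ := closed_walk_periodic hflat (τ - t + 1) w hwlen
    (by omega) hch hcl
  refine ⟨L, hL, fun k hk => ?_⟩
  rw [← hLper k (by omega), hwget k hk]

lemma blocks_exist [Fintype S] (hflat : Flat E) (ρ : ℕ → S)
    (hrun : ∀ k, E (ρ k) (ρ (k + 1))) : ∀ t, ∃ bs w, Blocks E ρ t bs w := by
  classical
  let Occ : ℕ → Finset S := fun t =>
    Finset.univ.filter fun x => (∃ τ, t ≤ τ ∧ ρ τ = x) ∧ ¬(∀ T, ∃ τ, T ≤ τ ∧ ρ τ = x)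
  have hmono : ∀ {t₁ t₂ : ℕ}, t₁ ≤ t₂ → Occ t₂ ⊆ Occ t₁ := by
    intro t₁ t₂ h x hx
    simp only [Occ, Finset.mem_filter, Finset.mem_univ, true_and] at hx ⊢
    obtain ⟨⟨τ, hτ, hρ⟩, hninf⟩ := hx
    exact ⟨⟨τ, by omega, hρ⟩, hninf⟩
  suffices H : ∀ N t, (Occ t).card ≤ N → ∃ bs w, Blocks E ρ t bs w from
    fun t => H _ t le_rfl
  intro N
  induction N using Nat.strong_induction_on with
  | _ N ihN =>
  intro t hcard
  set s := ρ t with hsdef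
  by_cases hinf : ∀ T, ∃ τ, T ≤ τ ∧ ρ τ = s
  · -- final loop
    obtain ⟨τ0, hτ0, hρτ0⟩ := hinf (t + 1)
    obtain ⟨L0, hL0, hL0per⟩ := run_loop hflat hrun (show t < τ0 by omega) hρτ0
    refine ⟨[], L0, Blocks.final t L0 hL0 ?_⟩
    intro j
    obtain ⟨τ, hτ, hρτ⟩ := hinf (t + j + 1)
    obtain ⟨L1, hL1, hL1per⟩ := run_loop hflat hrun (show t < τ by omega) hρτ
    have hL0head : L0.head? = some s := by
      rw [List.head?_eq_getElem?]
      have := hL0per 0 (by omega)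
      simpa using this
    have hL1head : L1.head? = some s := by
      rw [List.head?_eq_getElem?]
      have := hL1per 0 (by omega)
      simpa using this
    have heq : L1 = L0 := hflat s ⟨hL1, hL1head⟩ ⟨hL0, hL0head⟩
    rw [← heq]
    exact hL1per j (by omega)
  · -- s occurs finitely often
    push_neg at hinf
    obtain ⟨T, hT⟩ := hinf
    have hsmem : s ∈ Occ t := by
      simp only [Occ, Finset.mem_filter, Finset.mem_univ, true_and]
      refine ⟨⟨t, le_rfl, rfl⟩, ?_⟩
      intro hc
      obtain ⟨τ, hτ, hρ⟩ := hc T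
      exact hT τ hτ hρ
    have hrec : ∀ t', t ≤ t' → (∀ τ, t' ≤ τ → ρ τ ≠ s) → (Occ t').card < (Occ t).card := by
      intro t' ht' hno
      apply Finset.card_lt_card
      constructor
      · exact hmono ht'
      · intro hsub
        have := hsub hsmem
        simp only [Occ, Finset.mem_filter, Finset.mem_univ, true_and] at this
        obtain ⟨⟨τ, hτ, hρ⟩, -⟩ := this
        exact hno τ hτ hρ
    by_cases hocc : ∃ τ, t < τ ∧ ρ τ = s
    · -- the state recurs : loop block up to the last occurrence
      obtain ⟨τ1, hτ1, hρτ1⟩ := hocc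
      have hτ1T : τ1 < T := by
        by_contra hc
        exact hT τ1 (by omega) hρτ1
      set b := Nat.findGreatest (fun i => ρ i = s) T with hbdef
      have hρb : ρ b = s := by
        have h' := Nat.findGreatest_spec (P := fun i => ρ i = s) (n := T) (m := τ1)
          (show τ1 ≤ T by omega) hρτ1
        rw [hbdef]
        exact h'
      have hbge : τ1 ≤ b := by
        rw [hbdef]
        exact Nat.le_findGreatest (P := fun i => ρ i = s) (show τ1 ≤ T by omega) hρτ1
      have hblast : ∀ τ, b < τ → ρ τ ≠ s := by
        intro τ hτ
        rcases Nat.lt_or_ge τ T with h' | h'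
        · rw [hbdef] at hτ
          exact Nat.findGreatest_is_greatest (P := fun i => ρ i = s) hτ (by omega)
        · exact hT τ h'
      obtain ⟨L, hL, hLper⟩ := run_loop hflat hrun (show t < b by omega) hρb
      have hLpos : 0 < L.length := List.length_pos_iff.mpr hL.1
      have hdvd : L.length ∣ (b - t) := by
        have h1 : L[(b - t) % L.length]? = some s := by
          rw [hLper (b - t) le_rfl, show t + (b - t) = b by omega, hρb]
        have h0 : L[0]? = some s := by
          have := hLper 0 (by omega)
          simpa using this
        by_contra hnd
        have hne : (b - t) % L.length ≠ 0 := fun hc => hnd (Nat.dvd_iff_mod_eq_zero.mpr hc)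
        have := (List.nodup_iff_getElem?_ne_getElem?.mp hL.2.2.2) 0 ((b - t) % L.length)
          (by omega) (Nat.mod_lt _ hLpos)
        rw [h0, h1] at this
        exact this rfl
      have hple : L.length ≤ b - t := Nat.le_of_dvd (by omega) hdvd
      set n := (b - t) / L.length with hndef
      have hnp : n * L.length = b - t := Nat.div_mul_cancel hdvd
      have hn1 : 1 ≤ n := by
        rcases Nat.eq_zero_or_pos n with h' | h'
        · rw [h'] at hnp; simp at hnp; omega
        · exact h'
      have hbeq : t + n * L.length = b := by omega
      -- build the tail at b + 1
      obtain ⟨bs', w, hbs'⟩ := ihN (Occ (b+1)).card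
        (by have := hrec (b+1) (by omega) (fun τ hτ => hblast τ (by omega)); omega)
        (b+1) le_rfl
      refine ⟨(L, n) :: ([s], 1) :: bs', w, ?_⟩
      have hseg : ∀ δ, δ < L.length → L[δ]? = some (ρ (t + δ)) := by
        intro δ hδ
        have := hLper δ (by omega)
        rwa [Nat.mod_eq_of_lt hδ] at this
      have hper : ∀ k, k < n * L.length → ρ (t + k) = ρ (t + k % L.length) := by
        intro k hk
        have h1 := hLper k (by omega)
        have h2 := hLper (k % L.length) (by have := Nat.mod_lt k hLpos; omega)
        rw [Nat.mod_mod_of_dvd _ dvd_rfl] at h2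
        rw [h1] at h2
        exact Option.some_inj.mp h2
      have hclose : ρ (t + n * L.length) = ρ t := by
        rw [hbeq, hρb]
      have hna : NeverAfter ρ (ρ t) (t + n * L.length) := by
        rw [hbeq, ← hsdef]
        exact fun τ h1 h2 => hblast τ h1 h2
      refine Blocks.loop t L n _ w hL hseg hn1 hper hclose hna ?_
      rw [hbeq]
      have hsb : ([s], (1:ℕ)) = ([ρ b], (1:ℕ)) := by rw [hρb]
      rw [hsb]
      refine Blocks.single b bs' w ?_ ?_
      · rw [hρb]; exact fun τ h1 h2 => hblast τ h1 h2
      · exact hbs'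
    · -- the state never recurs : singleton block
      push_neg at hocc
      have hna : NeverAfter ρ s t := fun τ h1 h2 => hocc τ h1 h2
      obtain ⟨bs', w, hbs'⟩ := ihN (Occ (t+1)).card
        (by
          have := hrec (t+1) (by omega) (by
            intro τ hτ hc
            rcases Nat.eq_or_lt_of_le hτ with h' | h'
            · exact hocc τ (by omega) hc
            · exact hocc τ (by omega) hc)
          omega)
        (t+1) le_rfl
      exact ⟨([ρ t], 1) :: bs', w, Blocks.single t bs' w (by rw [← hsdef]; exact hna) hbs'⟩

end Stmt10

/-- Every run of a flat Kripke structure decomposes as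
`u_0^{n_0} u_1^{n_1} … u_{m-1}^{n_{m-1}} u_m^ω` with `|u_0 … u_m| ≤ 2|S|`. -/
theorem stmt10 {S : Type*} [Fintype S] (E : S → S → Prop) (sI : S)
    (hflat : Flat E) (ρ : ℕ → S) (hinit : ρ 0 = sI)
    (hrun : ∀ k, E (ρ k) (ρ (k + 1))) :
    ∃ (m : ℕ) (u : ℕ → List S) (nr : ℕ → ℕ),
      (∀ i, i ≤ m → u i ≠ []) ∧
      (∀ i, i < m → 1 ≤ nr i) ∧
      ((List.range (m + 1)).map u).flatten.length ≤ 2 * Fintype.card S ∧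
      (∀ k, k < (((List.range m).map
            (fun i => (List.replicate (nr i) (u i)).flatten)).flatten).length →
          (((List.range m).map
            (fun i => (List.replicate (nr i) (u i)).flatten)).flatten)[k]? = some (ρ k)) ∧
      (∀ j : ℕ,
          (u m)[j % (u m).length]? =
            some (ρ ((((List.range m).map
              (fun i => (List.replicate (nr i) (u i)).flatten)).flatten).length + j))) := by
  classical
  obtain ⟨bs, w, hb⟩ := Stmt10.blocks_exist hflat ρ hrun 0
  have hne := Stmt10.blocks_ne hb
  have hmatch := Stmt10.blocks_match hb
  have hbound := Stmt10.blocks_bound hflat hb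
  set m := bs.length with hmdef
  set u : ℕ → List S := fun i => if h : i < bs.length then (bs.get ⟨i, h⟩).1 else w
    with hudef
  set nr : ℕ → ℕ := fun i => if h : i < bs.length then (bs.get ⟨i, h⟩).2 else 1
    with hnrdef
  have hum : u m = w := by rw [hudef]; simp [hmdef]
  have hlist1 : (List.range (m + 1)).map u = bs.map Prod.fst ++ [w] := by
    apply List.ext_get
    · simp [hmdef]
    · intro i h1 h2
      simp only [List.get_eq_getElem, List.getElem_map, List.getElem_range]
      rw [List.getElem_append]
      rcases Nat.lt_or_ge i m with hi | hi
      · rw [dif_pos (by simp only [List.length_map]; omega)]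
        rw [hudef]
        simp only []
        rw [dif_pos (by omega)]
        simp
      · have : i = m := by simp only [List.length_map, List.length_range] at h1; omega
        subst this
        rw [dif_neg (by simp only [List.length_map]; omega)]
        rw [hudef]
        simp only []
        rw [dif_neg (by omega)]
        simp [hmdef]
  have hlist2 : (List.range m).map (fun i => (List.replicate (nr i) (u i)).flatten) =
      bs.map (fun b => (List.replicate b.2 b.1).flatten) := by
    apply List.ext_get
    · simp [hmdef]
    · intro i h1 h2
      simp only [List.get_eq_getElem, List.getElem_map, List.getElem_range]
      have hi : i < bs.length := by simp [hmdef] at h1; omega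
      rw [hudef, hnrdef]
      simp only []
      rw [dif_pos hi, dif_pos hi]
      rfl
  refine ⟨m, u, nr, ?_, ?_, ?_, ?_, ?_⟩
  · intro i hi
    rcases Nat.lt_or_ge i m with h | h
    · rw [hudef]; simp only []; rw [dif_pos (by omega)]
      exact (hne.1 _ (List.get_mem bs _)).1
    · have : i = m := by omega
      subst this
      rw [hum]
      exact hne.2
  · intro i hi
    rw [hnrdef]; simp only []; rw [dif_pos (by omega : i < bs.length)]
    exact (hne.1 _ (List.get_mem bs _)).2
  · rw [hlist1]
    have : ((bs.map Prod.fst ++ [w]).flatten).length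
        = ((bs.map Prod.fst).flatten).length + w.length := by
      simp
    rw [this]
    exact hbound
  · intro k hk
    rw [hlist2] at hk ⊢
    have := hmatch.1 k hk
    simpa using this
  · intro j
    rw [hlist2, hum]
    have := hmatch.2 j
    simpa using this
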